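/- In a finite abelian category with determinant defined via a dimension function d, if 0 → X → Y → Z → 0 is an exact sequence respected by an automorphism a of Y (inducing automorphisms on X and Z), then det(a|_Y) = det(a|_X)·det(a|_Z) in 𝔸 ⊗_ℤ ℂ*. -/
import Mathlib


open scoped TensorProduct

/-- The ring of algebraic integers, as a subring of `ℂ`. -/
noncomputable abbrev AlgInt : Type := integralClosure ℤ ℂ

open Module

lemma det_three {V W U : Type*}
    [AddCommGroup V] [Module ℂ V] [FiniteDimensional ℂ V]
    [AddCommGroup W] [Module ℂ W] [FiniteDimensional ℂ W]
    [AddCommGroup U] [Module ℂ U] [FiniteDimensional ℂ U]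
    (f : V →ₗ[ℂ] W) (g : W →ₗ[ℂ] U)
    (hf : Function.Injective f) (hg : Function.Surjective g)
    (hexact : LinearMap.range f = LinearMap.ker g)
    (aV : V ≃ₗ[ℂ] V) (aW : W ≃ₗ[ℂ] W) (aU : U ≃ₗ[ℂ] U)
    (hcomm1 : aW.toLinearMap ∘ₗ f = f ∘ₗ aV.toLinearMap)
    (hcomm2 : aU.toLinearMap ∘ₗ g = g ∘ₗ aW.toLinearMap) :
    LinearEquiv.det aW = LinearEquiv.det aV * LinearEquiv.det aU := by
  obtain ⟨s, hs⟩ := g.exists_rightInverse_of_surjective (LinearMap.range_eq_top.2 hg)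
  have hgs : ∀ u, g (s u) = u := fun u => congrFun (congrArg DFunLike.coe hs) u
  have hgf : ∀ v, g (f v) = 0 := fun v => by
    have : f v ∈ LinearMap.ker g := hexact ▸ LinearMap.mem_range_self f v
    exact this
  set e0 : V × U →ₗ[ℂ] W := f.coprod s with he0
  have he0app : ∀ p : V × U, e0 p = f p.1 + s p.2 := fun p => rfl
  have hbij : Function.Bijective e0 := by
    constructor
    · intro p q hpq
      have h1 : g (e0 p) = g (e0 q) := by rw [hpq]
      simp only [he0app, map_add, hgf, hgs, zero_add] at h1
      have h2 : f p.1 = f q.1 := by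
        have := hpq
        simp only [he0app, h1] at this
        exact add_right_cancel this
      exact Prod.ext (hf h2) h1
    · intro w
      have : w - s (g w) ∈ LinearMap.ker g := by
        simp [LinearMap.mem_ker, hgs]
      rw [← hexact] at this
      obtain ⟨v, hv⟩ := this
      exact ⟨(v, g w), by simp [he0app, hv]⟩
  set e : (V × U) ≃ₗ[ℂ] W := LinearEquiv.ofBijective e0 hbij with he
  have heapp : ∀ p : V × U, e p = f p.1 + s p.2 := fun p => rfl
  -- the conjugated map
  set T : (V × U) →ₗ[ℂ] (V × U) := e.symm.toLinearMap ∘ₗ aW.toLinearMap ∘ₗ e.toLinearMap with hT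
  have hsnd : ∀ p : V × U, (T p).2 = aU p.2 := by
    intro p
    have h1 : g (e (T p)) = g (aW (e p)) := by
      simp [hT, LinearEquiv.apply_symm_apply]
    have h2 : g (e (T p)) = (T p).2 := by
      simp [heapp, map_add, hgf, hgs]
    have h3 : g (aW (e p)) = aU (g (e p)) := by
      have := congrFun (congrArg DFunLike.coe hcomm2) (e p)
      simpa using this.symm
    have h4 : g (e p) = p.2 := by simp [heapp, map_add, hgf, hgs]
    rw [h2, h3, h4] at h1
    exact h1
  have hfst : ∀ v : V, T (v, 0) = (aV v, 0) := by
    intro v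
    have h1 : e (T (v, 0)) = aW (e (v, 0)) := by
      simp [hT, LinearEquiv.apply_symm_apply]
    have h2 : aW (e (v, 0)) = e (aV v, 0) := by
      have := congrFun (congrArg DFunLike.coe hcomm1) v
      simp only [heapp, map_zero, add_zero]
      simpa using this
    have := e.injective (h1.trans h2)
    exact this
  let bV := finBasis ℂ V
  let bU := finBasis ℂ U
  let b := bV.prod bU
  have hmat : LinearMap.toMatrix b b T =
      Matrix.fromBlocks (LinearMap.toMatrix bV bV aV.toLinearMap)
        ((LinearMap.toMatrix b b T).toBlocks₁₂)
        0 (LinearMap.toMatrix bU bU aU.toLinearMap) := by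
    ext (i | i) (j | j)
    · simp [Matrix.fromBlocks, LinearMap.toMatrix_apply, b, Basis.prod_apply, hfst,
        Matrix.toBlocks₁₂]
    · simp [Matrix.fromBlocks, Matrix.toBlocks₁₂]
    · -- entry (inr i, inl j): second component of T (bV j, 0) is aU 0 = 0
      simp only [Matrix.fromBlocks, Matrix.of_apply, Sum.elim_inr, Sum.elim_inl,
        Matrix.zero_apply, LinearMap.toMatrix_apply]
      have : T (b (Sum.inl j)) = (aV (bV j), 0) := by
        simpa [b, Basis.prod_apply] using hfst (bV j)
      rw [this]
      simp [b, Basis.prod_repr_inr]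
    · simp only [Matrix.fromBlocks, Matrix.of_apply, Sum.elim_inr,
        LinearMap.toMatrix_apply]
      have h2 : (T ((0 : V), bU j)).2 = aU (bU j) := by
        simpa using hsnd ((0 : V), bU j)
      simp [b, Basis.prod_repr_inr, h2]
  have hdet : LinearMap.det aW.toLinearMap =
      LinearMap.det aV.toLinearMap * LinearMap.det aU.toLinearMap := by
    have hc : LinearMap.det aW.toLinearMap = LinearMap.det T := by
      rw [hT, ← LinearMap.det_conj aW.toLinearMap e.symm, LinearEquiv.symm_symm]
    rw [hc, ← LinearMap.det_toMatrix b, hmat, Matrix.det_fromBlocks_zero₂₁,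
      LinearMap.det_toMatrix, LinearMap.det_toMatrix]
  ext
  rw [Units.val_mul, LinearEquiv.coe_det, LinearEquiv.coe_det, LinearEquiv.coe_det]
  exact hdet

/-- Multiplicativity of the categorical determinant on exact sequences.
For each simple `Z ∈ S`, applying the exact functor `Hom(P(Z), -)` to a short
exact sequence `0 → X → Y → Z' → 0` respected by an automorphism `a` of `Y`
yields a short exact sequence of finite dimensional vector spaces
`0 → V Z → W Z → U Z → 0` with compatible automorphisms `aV, aW, aU`.
Then `det(a|_Y) = det(a|_X) · det(a|_Z')` in `𝔸 ⊗_ℤ ℂ*` (written additively),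
where `det(a) = ∏_Z det(a on Hom(P(Z),·))^{d Z}` for the dimension function
`d` with algebraic-integer values. -/
theorem stmt7 {S : Type*} [Fintype S] (d : S → AlgInt)
    (V W U : S → Type*)
    [∀ Z, AddCommGroup (V Z)] [∀ Z, Module ℂ (V Z)] [∀ Z, FiniteDimensional ℂ (V Z)]
    [∀ Z, AddCommGroup (W Z)] [∀ Z, Module ℂ (W Z)] [∀ Z, FiniteDimensional ℂ (W Z)]
    [∀ Z, AddCommGroup (U Z)] [∀ Z, Module ℂ (U Z)] [∀ Z, FiniteDimensional ℂ (U Z)]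
    (f : ∀ Z, V Z →ₗ[ℂ] W Z) (g : ∀ Z, W Z →ₗ[ℂ] U Z)
    (hf : ∀ Z, Function.Injective (f Z)) (hg : ∀ Z, Function.Surjective (g Z))
    (hexact : ∀ Z, LinearMap.range (f Z) = LinearMap.ker (g Z))
    (aV : ∀ Z, V Z ≃ₗ[ℂ] V Z) (aW : ∀ Z, W Z ≃ₗ[ℂ] W Z) (aU : ∀ Z, U Z ≃ₗ[ℂ] U Z)
    (hcomm1 : ∀ Z, (aW Z).toLinearMap ∘ₗ f Z = f Z ∘ₗ (aV Z).toLinearMap)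
    (hcomm2 : ∀ Z, (aU Z).toLinearMap ∘ₗ g Z = g Z ∘ₗ (aW Z).toLinearMap) :
    (∑ Z : S, d Z ⊗ₜ[ℤ] Additive.ofMul (LinearEquiv.det (aW Z)) :
        AlgInt ⊗[ℤ] Additive ℂˣ) =
      (∑ Z : S, d Z ⊗ₜ[ℤ] Additive.ofMul (LinearEquiv.det (aV Z))) +
      (∑ Z : S, d Z ⊗ₜ[ℤ] Additive.ofMul (LinearEquiv.det (aU Z))) := by
  rw [← Finset.sum_add_distrib]
  refine Finset.sum_congr rfl fun Z _ => ?_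
  rw [det_three (f Z) (g Z) (hf Z) (hg Z) (hexact Z) (aV Z) (aW Z) (aU Z) (hcomm1 Z) (hcomm2 Z)]
  rw [show Additive.ofMul (LinearEquiv.det (aV Z) * LinearEquiv.det (aU Z)) =
    Additive.ofMul (LinearEquiv.det (aV Z)) + Additive.ofMul (LinearEquiv.det (aU Z)) from rfl,
    TensorProduct.tmul_add]
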